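/- Let D ⊣ C : A ⇄ P be an adjunction between categories with pullbacks and σ : S → R a Galois descent morphism. Then the pullback functor (S_σ)* : Split_R(σ) → Split_R(σ)/S_σ is monadic; i.e. !: S_σ → 1 is an effective descent morphism in Split_R(σ). -/

import Mathlib

open CategoryTheory Limits

namespace Stmt12Aux

variable {C : Type*} [Category C]

/-- Move a morphism of a full subcategory to the ambient category. -/
def FS.homOf {P : C → Prop} {X Y : ObjectProperty.FullSubcategory P} (f : X ⟶ Y) : X.obj ⟶ Y.obj := f.hom

/-- Regard a morphism of the ambient category as a morphism of a full subcategory. -/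
def FS.homTo {P : C → Prop} {X Y : ObjectProperty.FullSubcategory P} (f : X.obj ⟶ Y.obj) : X ⟶ Y := ObjectProperty.homMk f

/-- Build an isomorphism in a full subcategory from one in the ambient category. -/
def FS.isoOf {P : C → Prop} {X Y : ObjectProperty.FullSubcategory P} (e : X.obj ≅ Y.obj) : X ≅ Y :=
  ObjectProperty.isoMk _ e

@[ext] lemma FS.hom_ext {P : C → Prop} {X Y : ObjectProperty.FullSubcategory P} {f g : X ⟶ Y}
    (h : FS.homOf f = FS.homOf g) : f = g := ObjectProperty.hom_ext _ h

@[simp] lemma FS.homOf_comp {P : C → Prop} {X Y Z : ObjectProperty.FullSubcategory P} (f : X ⟶ Y) (g : Y ⟶ Z) :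
    FS.homOf (f ≫ g) = FS.homOf f ≫ FS.homOf g := rfl

@[simp] lemma FS.homOf_homTo {P : C → Prop} {X Y : ObjectProperty.FullSubcategory P} (f : X.obj ⟶ Y.obj) :
    FS.homOf (FS.homTo (X := X) (Y := Y) f) = f := rfl

@[simp] lemma FS.homOf_isoOf_hom {P : C → Prop} {X Y : ObjectProperty.FullSubcategory P} (e : X.obj ≅ Y.obj) :
    FS.homOf (FS.isoOf (X := X) (Y := Y) e).hom = e.hom := rfl

@[simp] lemma FS.homOf_isoOf_inv {P : C → Prop} {X Y : ObjectProperty.FullSubcategory P} (e : X.obj ≅ Y.obj) :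
    FS.homOf (FS.isoOf (X := X) (Y := Y) e).inv = e.inv := rfl

@[simp] lemma FS.isoOf_hom {P : C → Prop} {X Y : ObjectProperty.FullSubcategory P} (e : X.obj ≅ Y.obj) :
    (FS.isoOf (X := X) (Y := Y) e).hom = FS.homTo e.hom := rfl

@[simp] lemma FS.isoOf_inv {P : C → Prop} {X Y : ObjectProperty.FullSubcategory P} (e : X.obj ≅ Y.obj) :
    (FS.isoOf (X := X) (Y := Y) e).inv = FS.homTo e.inv := rfl

@[simp] lemma FS.over_comp_left {X : C} {P : Over X → Prop} {U V W : ObjectProperty.FullSubcategory P}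
    (f : U ⟶ V) (g : V ⟶ W) :
    (f ≫ g).hom.left = f.hom.left ≫ g.hom.left := rfl

@[simp] lemma FS.over_isoMk_hom_left {X : C} {f g : Over X} (hl : f.left ≅ g.left)
    (hw : hl.hom ≫ g.hom = f.hom) : Over.Hom.left (Over.isoMk hl hw).hom = hl.hom := rfl

@[simp] lemma FS.over_isoMk_inv_left {X : C} {f g : Over X} (hl : f.left ≅ g.left)
    (hw : hl.hom ≫ g.hom = f.hom) : Over.Hom.left (Over.isoMk hl hw).inv = hl.inv := rfl

theorem reflectsIsomorphisms_of_natIso {D : Type*} [Category D] {F G : C ⥤ D} (e : F ≅ G)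
    [F.ReflectsIsomorphisms] : G.ReflectsIsomorphisms :=
  ⟨fun u hu => by
    haveI := hu
    haveI : IsIso (F.map u) := by
      have h : F.map u = e.hom.app _ ≫ G.map u ≫ e.inv.app _ := by
        rw [← Category.assoc, ← e.hom.naturality u]; simp
      rw [h]; infer_instance
    exact isIso_of_reflects_iso u F⟩

/-- Conjugating a split coequalizer by isomorphisms. -/
def IsSplitCoequalizer.ofIsos {X Y X' Y' Z : C} {f g : X ⟶ Y} {π : Y ⟶ Z}
    (q : IsSplitCoequalizer f g π) (a : X ≅ X') (b : Y ≅ Y') (f' g' : X' ⟶ Y')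
    (hf : f' = a.inv ≫ f ≫ b.hom) (hg : g' = a.inv ≫ g ≫ b.hom) :
    IsSplitCoequalizer f' g' (b.inv ≫ π) where
  rightSection := q.rightSection ≫ b.hom
  leftSection := b.inv ≫ q.leftSection ≫ a.hom
  condition := by
    rw [hf, hg]
    simp only [Category.assoc, Iso.hom_inv_id_assoc]
    rw [q.condition]
  rightSection_π := by
    simp only [Category.assoc, Iso.hom_inv_id_assoc]
    simp [q.rightSection_π]
  leftSection_bottom := by
    rw [hg]
    simp only [Category.assoc, Iso.hom_inv_id_assoc]
    rw [reassoc_of% q.leftSection_bottom]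
    simp
  leftSection_top := by
    rw [hf]
    simp only [Category.assoc, Iso.hom_inv_id_assoc]
    rw [reassoc_of% q.leftSection_top]


section Main

variable {A : Type*} [Category A] [HasPullbacks A] {S R : A} (σ : S ⟶ R)
variable {Q : Type*} [Category Q] {L : Over S ⥤ Q} {U : Q ⥤ Over S} (adjS : L ⊣ U)

/-- The σ-split objects. -/
abbrev Pred : Over R → Prop := fun Aa => IsIso (adjS.unit.app ((Over.pullback σ).obj Aa))

theorem isIso_unit_of_iso {X Y : Over S} (e : X ≅ Y) (hX : IsIso (adjS.unit.app X)) :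
    IsIso (adjS.unit.app Y) := by
  have h := adjS.unit.naturality e.hom
  have : adjS.unit.app Y = e.inv ≫ adjS.unit.app X ≫ (L ⋙ U).map e.hom := by
    rw [← h]; simp
  rw [this]
  infer_instance

theorem Pred.of_iso {X Y : Over R} (e : X ≅ Y) (h : Pred σ adjS X) : Pred σ adjS Y :=
  isIso_unit_of_iso adjS ((Over.pullback σ).mapIso e) h

theorem isIso_unit_app_U (hcu : IsIso adjS.counit) (X : Q) : IsIso (adjS.unit.app (U.obj X)) := by
  haveI := hcu
  haveI : IsIso (U.map (adjS.counit.app X)) := inferInstance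
  haveI : IsIso (adjS.unit.app (U.obj X) ≫ U.map (adjS.counit.app X)) := by
    rw [adjS.right_triangle_components X]; exact IsIso.id _
  exact IsIso.of_isIso_comp_right (adjS.unit.app (U.obj X)) (U.map (adjS.counit.app X))

theorem pred_mk_sigma {T : Q} (hT : IsTerminal T)
    (hsp : ∀ X : Q, Pred σ adjS ((Over.map σ).obj (U.obj X))) : Pred σ adjS (Over.mk σ) := by
  haveI := adjS.rightAdjoint_preservesLimits
  have hUT : IsTerminal (U.obj T) := IsTerminal.isTerminalObj U T hT
  have e1 : U.obj T ≅ Over.mk (𝟙 S) := hUT.uniqueUpToIso Over.mkIdTerminal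
  have e2 : (Over.map σ).obj (U.obj T) ≅ Over.mk σ :=
    (Over.map σ).mapIso e1 ≪≫ Over.isoMk (Iso.refl _) (by simp)
  exact Pred.of_iso σ adjS e2 (hsp T)

theorem pred_pullback (hcu : IsIso adjS.counit)
    (hsp : ∀ X : Q, Pred σ adjS ((Over.map σ).obj (U.obj X)))
    {Aa : Over R} (hA : Pred σ adjS Aa) :
    Pred σ adjS ((Over.map σ).obj ((Over.pullback σ).obj Aa)) := by
  haveI : IsIso (adjS.unit.app ((Over.pullback σ).obj Aa)) := hA
  exact Pred.of_iso σ adjS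
    ((Over.map σ).mapIso (asIso (adjS.unit.app ((Over.pullback σ).obj Aa))).symm)
    (hsp (L.obj ((Over.pullback σ).obj Aa)))

theorem isIso_unit_pt {K : WalkingParallelPair ⥤ Over S} [PreservesColimit K (L ⋙ U)]
    {c : Cocone K} (hc : IsColimit c)
    (h0 : IsIso (adjS.unit.app (K.obj WalkingParallelPair.zero)))
    (h1 : IsIso (adjS.unit.app (K.obj WalkingParallelPair.one))) :
    IsIso (adjS.unit.app c.pt) := by
  let w : K ⟶ K ⋙ (L ⋙ U) :=
    { app := fun j => adjS.unit.app (K.obj j)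
      naturality := fun i j h => by simpa using adjS.unit.naturality (K.map h) }
  haveI : ∀ j, IsIso (w.app j) := by rintro (_ | _) <;> [exact h0; exact h1]
  haveI : IsIso w := NatIso.isIso_of_isIso_app w
  have hc' : IsColimit ((L ⋙ U).mapCocone c) := isColimitOfPreserves _ hc
  have key : adjS.unit.app c.pt = (IsColimit.coconePointsIsoOfNatIso hc hc' (asIso w)).hom := by
    apply hc.hom_ext; intro j
    rw [IsColimit.comp_coconePointsIsoOfNatIso_hom]
    simpa [w] using adjS.unit.naturality (c.ι.app j)
  rw [key]
  infer_instance

end Main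

section Cats

variable {A : Type*} [Category A] [HasPullbacks A] {S R : A} (σ : S ⟶ R)
variable {Q : Type*} [Category Q] {L : Over S ⥤ Q} {U : Q ⥤ Over S} (adjS : L ⊣ U)

/-- The category of σ-split objects. -/
abbrev Spl := ObjectProperty.FullSubcategory (Pred σ adjS)

/-- The category standing in for the slice of `Spl` over `S_σ`. -/
abbrev DD := ObjectProperty.FullSubcategory (fun Z : Over S => Pred σ adjS ((Over.map σ).obj Z))

abbrev ιS : Spl σ adjS ⥤ Over R := ObjectProperty.ι _

abbrev ιD : DD σ adjS ⥤ Over S := ObjectProperty.ι _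

variable (hcu : IsIso adjS.counit)
variable (hsp : ∀ X : Q, Pred σ adjS ((Over.map σ).obj (U.obj X)))
variable (hσ : Pred σ adjS (Over.mk σ))

/-- Restriction of `Over.pullback σ` to the split objects. -/
noncomputable def pbD : Spl σ adjS ⥤ DD σ adjS :=
  ObjectProperty.lift _ (ιS σ adjS ⋙ Over.pullback σ)
    (fun Aa => pred_pullback σ adjS hcu hsp Aa.2)

/-- `S_σ` as an object of `Spl`. -/
abbrev Ssig : Spl σ adjS := ⟨Over.mk σ, hσ⟩

noncomputable def bIso (B : Over (Ssig σ adjS hσ)) :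
    B.left.obj ≅ (Over.map σ).obj (Over.mk (FS.homOf B.hom).left) :=
  Over.isoMk (Iso.refl _) (by simpa using Over.w (FS.homOf B.hom))

noncomputable def dIso (X : Over S) : Over.mk X.hom ≅ X := Over.isoMk (Iso.refl _) (by simp)

/-- The forward functor of the equivalence `Over S_σ ≌ DD`. -/
noncomputable def eFun : Over (Ssig σ adjS hσ) ⥤ DD σ adjS where
  obj B := ⟨Over.mk (FS.homOf B.hom).left, Pred.of_iso σ adjS (bIso σ adjS hσ B) B.left.2⟩
  map {B B'} ψ := FS.homTo (Over.homMk (FS.homOf ψ.left).left (by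
    have h1 : (FS.homOf ψ.left ≫ FS.homOf B'.hom).left = (FS.homOf B.hom).left :=
      congrArg (fun q : B.left ⟶ Ssig σ adjS hσ => (FS.homOf q).left) (Over.w ψ)
    simpa using h1))
  map_id B := by ext; rfl
  map_comp ψ χ := by ext; rfl

/-- The backward functor of the equivalence `Over S_σ ≌ DD`. -/
noncomputable def eInv : DD σ adjS ⥤ Over (Ssig σ adjS hσ) where
  obj Z := Over.mk
    (FS.homTo (X := ⟨(Over.map σ).obj Z.obj, Z.2⟩) (Y := Ssig σ adjS hσ)
      (Over.homMk Z.obj.hom (by simp)))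
  map {Z Z'} u := Over.homMk
    (FS.homTo (X := ⟨(Over.map σ).obj Z.obj, Z.2⟩) (Y := ⟨(Over.map σ).obj Z'.obj, Z'.2⟩)
      ((Over.map σ).map (FS.homOf u)))
    (by ext; simpa using Over.w (FS.homOf u))

/-- unit of the equivalence -/
noncomputable def eUnit : 𝟭 (Over (Ssig σ adjS hσ)) ≅ eFun σ adjS hσ ⋙ eInv σ adjS hσ :=
  NatIso.ofComponents
    (fun B => Over.isoMk (FS.isoOf (bIso σ adjS hσ B)) (by ext; simp [bIso, eFun, eInv]))
    (by intro B B' ψ; ext; simp [bIso, eFun, eInv])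

/-- counit of the equivalence -/
noncomputable def eCounit : eInv σ adjS hσ ⋙ eFun σ adjS hσ ≅ 𝟭 (DD σ adjS) :=
  NatIso.ofComponents
    (fun Z => FS.isoOf (dIso Z.obj))
    (by intro Z Z' u; ext; simp [dIso, eFun, eInv]; exact (Category.comp_id _).trans (Category.id_comp _).symm)

/-- The equivalence `Over S_σ ≌ DD`. -/
noncomputable def eEquiv : Over (Ssig σ adjS hσ) ≌ DD σ adjS :=
  CategoryTheory.Equivalence.mk (eFun σ adjS hσ) (eInv σ adjS hσ) (eUnit σ adjS hσ) (eCounit σ adjS hσ)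

/-- The right adjoint `(S_σ)^*`. -/
noncomputable def stFunctor : Spl σ adjS ⥤ Over (Ssig σ adjS hσ) :=
  pbD σ adjS hcu hsp ⋙ (eEquiv σ adjS hσ).inverse

noncomputable def comm1 : (eFun σ adjS hσ ⋙ ιD σ adjS) ⋙ Over.map σ ≅ Over.forget (Ssig σ adjS hσ) ⋙ ιS σ adjS :=
  NatIso.ofComponents (fun B => (bIso σ adjS hσ B).symm)
    (by intro B B' ψ; ext; simp [bIso, eFun]; rfl)

noncomputable def comm2 : ιS σ adjS ⋙ Over.pullback σ ≅
    stFunctor σ adjS hcu hsp hσ ⋙ (eFun σ adjS hσ ⋙ ιD σ adjS) :=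
  NatIso.ofComponents
    (fun Aa => (dIso ((Over.pullback σ).obj Aa.obj)).symm)
    (by intro Aa Bb u; ext; simp [dIso, eFun, eInv, stFunctor, pbD, eEquiv, FS.homOf, FS.homTo, CategoryTheory.Equivalence.mk]; exact (Category.comp_id _).trans (Category.id_comp _).symm)

/-- The adjunction `Σ_{S_σ} ⊣ (S_σ)^*`. -/
noncomputable def stAdj : Over.forget (Ssig σ adjS hσ) ⊣ stFunctor σ adjS hcu hsp hσ :=
  (Over.mapPullbackAdj σ).restrictFullyFaithful
    ((eEquiv σ adjS hσ).fullyFaithfulFunctor.comp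
      (Functor.FullyFaithful.ofFullyFaithful (ιD σ adjS)))
    (Functor.FullyFaithful.ofFullyFaithful (ιS σ adjS))
    (comm1 σ adjS hσ) (comm2 σ adjS hcu hsp hσ)

variable [MonadicRightAdjoint (Over.pullback σ)]

theorem pb_reflectsIso : (Over.pullback σ).ReflectsIsomorphisms := by
  haveI : (Monad.comparison (monadicAdjunction (Over.pullback σ))).IsEquivalence := inferInstance
  exact reflectsIsomorphisms_of_natIso (Monad.comparisonForget (monadicAdjunction (Over.pullback σ)))

theorem transfer_split {A₁ A₂ : Spl σ adjS} (f : A₁ ⟶ A₂) (g : A₁ ⟶ A₂)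
    (hp : (stFunctor σ adjS hcu hsp hσ).IsSplitPair f g) :
    HasSplitCoequalizer ((Over.pullback σ).map ((ιS σ adjS).map f))
      ((Over.pullback σ).map ((ιS σ adjS).map g)) := by
  obtain ⟨Z, π, ⟨q⟩⟩ := hp.splittable
  let q' := q.map (eFun σ adjS hσ ⋙ ιD σ adjS)
  let e := eEquiv σ adjS hσ
  let a₁ := (ιD σ adjS).mapIso (e.counitIso.app ((pbD σ adjS hcu hsp).obj A₁))
  let a₂ := (ιD σ adjS).mapIso (e.counitIso.app ((pbD σ adjS hcu hsp).obj A₂))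
  have key : ∀ u : A₁ ⟶ A₂,
      (Over.pullback σ).map ((ιS σ adjS).map u) =
        a₁.inv ≫ (eFun σ adjS hσ ⋙ ιD σ adjS).map ((stFunctor σ adjS hcu hsp hσ).map u) ≫ a₂.hom := by
    intro u
    have hnat := e.counitIso.hom.naturality ((pbD σ adjS hcu hsp).map u)
    have key' : (pbD σ adjS hcu hsp).map u =
        e.counitIso.inv.app ((pbD σ adjS hcu hsp).obj A₁) ≫
          ((e.inverse ⋙ e.functor).map ((pbD σ adjS hcu hsp).map u) ≫
            e.counitIso.hom.app ((pbD σ adjS hcu hsp).obj A₂)) := by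
      rw [hnat]; simp
    have := congrArg (ιD σ adjS).map key'
    simp only [Functor.map_comp] at this
    exact this
  exact ⟨⟨_, _, ⟨IsSplitCoequalizer.ofIsos q' a₁ a₂ _ _ (key f) (key g)⟩⟩⟩

theorem st_reflectsIso : (stFunctor σ adjS hcu hsp hσ).ReflectsIsomorphisms := by
  constructor
  intro A₁ A₂ u hu
  haveI := hu
  let e := eEquiv σ adjS hσ
  haveI : IsIso ((pbD σ adjS hcu hsp).map u) := by
    have hnat := e.counitIso.hom.naturality ((pbD σ adjS hcu hsp).map u)
    have key : (pbD σ adjS hcu hsp).map u =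
        e.counitIso.inv.app ((pbD σ adjS hcu hsp).obj A₁) ≫
          ((e.inverse ⋙ e.functor).map ((pbD σ adjS hcu hsp).map u) ≫
            e.counitIso.hom.app ((pbD σ adjS hcu hsp).obj A₂)) := by
      rw [hnat]; simp
    haveI : IsIso ((e.inverse ⋙ e.functor).map ((pbD σ adjS hcu hsp).map u)) :=
      (inferInstance : IsIso (e.functor.map ((stFunctor σ adjS hcu hsp hσ).map u)))
    rw [key]
    infer_instance
  haveI : IsIso ((Over.pullback σ).map ((ιS σ adjS).map u)) :=
    (inferInstance : IsIso ((ιD σ adjS).map ((pbD σ adjS hcu hsp).map u)))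
  haveI := pb_reflectsIso σ
  haveI : IsIso ((ιS σ adjS).map u) := isIso_of_reflects_iso ((ιS σ adjS).map u) (Over.pullback σ)
  exact isIso_of_reflects_iso u (ιS σ adjS)

theorem beck_core {A₁ A₂ : Spl σ adjS} (f g : A₁ ⟶ A₂)
    (sp : HasSplitCoequalizer ((Over.pullback σ).map ((ιS σ adjS).map f))
      ((Over.pullback σ).map ((ιS σ adjS).map g))) :
    HasCoequalizer f g ∧ PreservesColimit (parallelPair f g) (stFunctor σ adjS hcu hsp hσ) := by
  haveI := sp
  let KR := parallelPair ((ιS σ adjS).map f) ((ιS σ adjS).map g)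
  haveI : CreatesColimit KR (Over.pullback σ) :=
    Monad.createsGSplitCoequalizersOfMonadic (Over.pullback σ) _ _
  haveI h1 : HasSplitCoequalizer ((KR ⋙ Over.pullback σ).map WalkingParallelPairHom.left)
      ((KR ⋙ Over.pullback σ).map WalkingParallelPairHom.right) := sp
  haveI : HasColimit (KR ⋙ Over.pullback σ) := hasColimit_of_iso (diagramIsoParallelPair _)
  haveI : HasColimit KR := hasColimit_of_created KR (Over.pullback σ)
  haveI : PreservesColimit KR (Over.pullback σ) := inferInstance
  haveI : PreservesColimit (KR ⋙ Over.pullback σ) (L ⋙ U) :=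
    preservesColimit_of_iso_diagram _ (diagramIsoParallelPair _).symm
  have hPred : Pred σ adjS (colimit KR) := by
    have hc' : IsColimit ((Over.pullback σ).mapCocone (colimit.cocone KR)) :=
      isColimitOfPreserves _ (colimit.isColimit KR)
    exact isIso_unit_pt adjS hc' A₁.2 A₂.2
  letI : CreatesColimit (parallelPair f g) (ιS σ adjS) := by
    refine createsColimitFullSubcategoryInclusion' (parallelPair f g)
      (c := (Cocone.precompose (diagramIsoParallelPair
        (parallelPair f g ⋙ ιS σ adjS)).hom).obj (colimit.cocone KR))
      ((IsColimit.precomposeHomEquiv _ _).symm (colimit.isColimit KR)) hPred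
  haveI h2 : HasColimit (parallelPair ((parallelPair f g ⋙ ιS σ adjS).map WalkingParallelPairHom.left)
      ((parallelPair f g ⋙ ιS σ adjS).map WalkingParallelPairHom.right)) :=
    (inferInstance : HasColimit KR)
  haveI : HasColimit (parallelPair f g ⋙ ιS σ adjS) := hasColimit_of_iso (diagramIsoParallelPair _)
  haveI : HasColimit (parallelPair f g) := hasColimit_of_created _ (ιS σ adjS)
  haveI : PreservesColimit (parallelPair f g) (ιS σ adjS) := inferInstance
  haveI h3 : PreservesColimit (parallelPair ((parallelPair f g ⋙ ιS σ adjS).map WalkingParallelPairHom.left)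
      ((parallelPair f g ⋙ ιS σ adjS).map WalkingParallelPairHom.right)) (Over.pullback σ) :=
    (inferInstance : PreservesColimit KR (Over.pullback σ))
  haveI : PreservesColimit (parallelPair f g ⋙ ιS σ adjS) (Over.pullback σ) :=
    preservesColimit_of_iso_diagram _ (diagramIsoParallelPair _).symm
  haveI : PreservesColimit (parallelPair f g) (ιS σ adjS ⋙ Over.pullback σ) := inferInstance
  haveI : PreservesColimit (parallelPair f g)
      (stFunctor σ adjS hcu hsp hσ ⋙ (eFun σ adjS hσ ⋙ ιD σ adjS)) :=
    preservesColimit_of_natIso _ (comm2 σ adjS hcu hsp hσ)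
  haveI : (eFun σ adjS hσ).Full := (eEquiv σ adjS hσ).fullyFaithfulFunctor.full
  haveI : (eFun σ adjS hσ).Faithful := (eEquiv σ adjS hσ).fullyFaithfulFunctor.faithful
  haveI : ReflectsColimitsOfSize (eFun σ adjS hσ ⋙ ιD σ adjS) := fullyFaithful_reflectsColimits _
  haveI : PreservesColimit (parallelPair f g) (stFunctor σ adjS hcu hsp hσ) :=
    preservesColimit_of_reflects_of_preserves _ (eFun σ adjS hσ ⋙ ιD σ adjS)
  exact ⟨inferInstance, inferInstance⟩

/-- Beck's monadicity theorem applied to `(S_σ)^*`. -/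
noncomputable def stMonadic : MonadicRightAdjoint (stFunctor σ adjS hcu hsp hσ) := by
  haveI : (stFunctor σ adjS hcu hsp hσ).ReflectsIsomorphisms := st_reflectsIso σ adjS hcu hsp hσ
  haveI : Monad.HasCoequalizerOfIsSplitPair (stFunctor σ adjS hcu hsp hσ) :=
    ⟨fun {A₁ A₂} f g hp =>
      (beck_core σ adjS hcu hsp hσ f g (transfer_split σ adjS hcu hsp hσ f g hp)).1⟩
  haveI : Monad.PreservesColimitOfIsSplitPair (stFunctor σ adjS hcu hsp hσ) :=
    ⟨fun {A₁ A₂} f g hp =>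
      (beck_core σ adjS hcu hsp hσ f g (transfer_split σ adjS hcu hsp hσ f g hp)).2⟩
  exact Monad.monadicOfHasPreservesGSplitCoequalizersOfReflectsIsomorphisms
    (stAdj σ adjS hcu hsp hσ)

end Cats
end Stmt12Aux

open Stmt12Aux in
/-- Let `F ⊣ U : A ⇄ P` be an adjunction between categories with
pullbacks and `σ : S ⟶ R` a Galois descent morphism.  Then `S_σ ∈ Split_R(σ)` and the
functor `(S_σ)* : Split_R(σ) ⥤ Split_R(σ)/S_σ` (the right adjoint of the domain functor
`Σ_{S_σ} = Over.forget`) exists and is monadic; i.e. `! : S_σ ⟶ 1` is an effective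
descent morphism in `Split_R(σ)`. -/
theorem stmt12 {A P : Type*} [Category A] [Category P] [HasPullbacks A] [HasPullbacks P]
    (F : A ⥤ P) (U : P ⥤ A) (adj : F ⊣ U) {S R : A} (σ : S ⟶ R)
    (US : Over (F.obj S) ⥤ Over S)
    (adjS : (Over.post F : Over S ⥤ Over (F.obj S)) ⊣ US)
    [MonadicRightAdjoint (Over.pullback σ)]
    (hcounit : IsIso adjS.counit)
    (hsplit : ∀ X : Over (F.obj S),
      IsIso (adjS.unit.app ((Over.pullback σ).obj ((Over.map σ).obj (US.obj X))))) :
    ∃ h : IsIso (adjS.unit.app ((Over.pullback σ).obj (Over.mk σ))),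
      ∃ (st : ObjectProperty.FullSubcategory
            (fun Aa : Over R => IsIso (adjS.unit.app ((Over.pullback σ).obj Aa))) ⥤
          Over (⟨Over.mk σ, h⟩ :
            ObjectProperty.FullSubcategory
              (fun Aa : Over R => IsIso (adjS.unit.app ((Over.pullback σ).obj Aa)))))
        (_ : Over.forget (⟨Over.mk σ, h⟩ :
            ObjectProperty.FullSubcategory
              (fun Aa : Over R => IsIso (adjS.unit.app ((Over.pullback σ).obj Aa)))) ⊣ st),
        Nonempty (MonadicRightAdjoint st) := by
  have hσ : Pred σ adjS (Over.mk σ) :=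
    pred_mk_sigma σ adjS Over.mkIdTerminal (fun X => hsplit X)
  exact ⟨hσ, stFunctor σ adjS hcounit (fun X => hsplit X) hσ,
    stAdj σ adjS hcounit (fun X => hsplit X) hσ,
    ⟨stMonadic σ adjS hcounit (fun X => hsplit X) hσ⟩⟩
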